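/- Let 1 ≤ p ≤ n be integers and let M = (t_{ij}) be a random complex p×n matrix whose entries are independent random variables with E(t_{ij}) = 0, E(|t_{ij}|²) = 1 and finite fourth moments. Let J₁, J₂ ⊆ {1,…,n} be sets of cardinality at most p and let σ₁ be a permutation of J₁ and σ₂ a permutation of J₂. If σ₁ contains a cycle l of length at least 2 such that neither l nor l^{-1} is a cycle of σ₂, then E(ξ*_{σ₁} · conj(ξ*_{σ₂})) = 0. -/

import Mathlib

open MeasureTheory ProbabilityTheory Matrix
open scoped ENNReal

/-- `ξ*_σ = Σ_τ Π_{j∈J} conj(t_{τ(j),j}) t_{τ(j),σ(j)}`, the sum being over all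
injective maps `τ : J → {1,…,p}`. -/
noncomputable def xiStar {p n : ℕ} (M : Matrix (Fin p) (Fin n) ℂ) (J : Finset (Fin n))
    (σ : Equiv.Perm (Fin n)) : ℂ :=
  ∑ τ : { x // x ∈ J } ↪ Fin p, ∏ j : { x // x ∈ J },
    (starRingEnd ℂ) (M (τ j) j) * M (τ j) (σ j)

section FiberProd

variable {α γ β : Type*}

lemma prod_comp_univ [Fintype γ] [DecidableEq γ] [CommMonoid β] (s : Finset α)
    (g : α → γ) (f : γ → β) :
    ∏ a ∈ s, f (g a) = ∏ e : γ, f e ^ (s.filter fun a => g a = e).card := by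
  rw [← Finset.prod_fiberwise_of_maps_to (t := (Finset.univ : Finset γ))
      (fun x _ => Finset.mem_univ (g x)) (fun a => f (g a))]
  refine Finset.prod_congr rfl fun e _ => ?_
  rw [Finset.prod_congr rfl (fun a ha => ?_), Finset.prod_const]
  rw [(Finset.mem_filter.mp ha).2]

end FiberProd

section IndepProd

variable {Ω : Type*} [MeasurableSpace Ω] {μ : Measure Ω} [IsProbabilityMeasure μ]

lemma indepFun_integral_mul_complex {X Y : Ω → ℂ}
    (h : IndepFun X Y μ) (hX : Measurable X) (hY : Measurable Y) :
    ∫ ω, X ω * Y ω ∂μ = (∫ ω, X ω ∂μ) * ∫ ω, Y ω ∂μ := by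
  have hmap : μ.map (fun ω => (X ω, Y ω)) = (μ.map X).prod (μ.map Y) :=
    (indepFun_iff_map_prod_eq_prod_map_map hX.aemeasurable hY.aemeasurable).mp h
  haveI : IsProbabilityMeasure (μ.map X) := Measure.isProbabilityMeasure_map hX.aemeasurable
  haveI : IsProbabilityMeasure (μ.map Y) := Measure.isProbabilityMeasure_map hY.aemeasurable
  calc ∫ ω, X ω * Y ω ∂μ
      = ∫ z : ℂ × ℂ, z.1 * z.2 ∂(μ.map (fun ω => (X ω, Y ω))) := by
        rw [integral_map (hX.prodMk hY).aemeasurable (f := fun z : ℂ × ℂ => z.1 * z.2)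
          (measurable_fst.mul measurable_snd).aestronglyMeasurable]
    _ = ∫ z : ℂ × ℂ, z.1 * z.2 ∂((μ.map X).prod (μ.map Y)) := by rw [hmap]
    _ = (∫ x, x ∂(μ.map X)) * ∫ y, y ∂(μ.map Y) := integral_prod_mul id id
    _ = (∫ ω, X ω ∂μ) * ∫ ω, Y ω ∂μ := by
        have hXid : (∫ x : ℂ, x ∂(μ.map X)) = ∫ ω, X ω ∂μ :=
          integral_map hX.aemeasurable aestronglyMeasurable_id
        have hYid : (∫ x : ℂ, x ∂(μ.map Y)) = ∫ ω, Y ω ∂μ :=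
          integral_map hY.aemeasurable aestronglyMeasurable_id
        rw [hXid, hYid]

lemma iIndep_integral_prod {ι : Type*} (f : ι → Ω → ℂ)
    (hindep : iIndepFun f μ)
    (hmeas : ∀ i, Measurable (f i)) (hint : ∀ i, Integrable (f i) μ)
    (s : Finset ι) :
    Integrable (fun ω => ∏ i ∈ s, f i ω) μ ∧
      ∫ ω, ∏ i ∈ s, f i ω ∂μ = ∏ i ∈ s, ∫ ω, f i ω ∂μ := by
  classical
  induction s using Finset.induction_on with
  | empty => simp
  | @insert a s ha ih =>
    have hIF : IndepFun (∏ j ∈ s, f j) (f a) μ :=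
      hindep.indepFun_finsetProd_of_notMem hmeas ha
    have hprod_meas : Measurable (fun ω => ∏ j ∈ s, f j ω) :=
      Finset.measurable_prod s fun i _ => hmeas i
    have hIF' : IndepFun (f a) (fun ω => ∏ j ∈ s, f j ω) μ := by
      have : (∏ j ∈ s, f j) = fun ω => ∏ j ∈ s, f j ω := by
        funext ω; simp
      rw [this] at hIF
      exact hIF.symm
    have hint' : Integrable (fun ω => f a ω * ∏ j ∈ s, f j ω) μ := by
      have := hIF'.integrable_mul (hint a) ih.1
      exact this
    constructor
    · simpa [Finset.prod_insert ha] using hint'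
    · rw [Finset.prod_insert ha]
      calc ∫ ω, ∏ i ∈ insert a s, f i ω ∂μ
          = ∫ ω, f a ω * ∏ j ∈ s, f j ω ∂μ := by
            simp [Finset.prod_insert ha]
        _ = (∫ ω, f a ω ∂μ) * ∫ ω, ∏ j ∈ s, f j ω ∂μ :=
            indepFun_integral_mul_complex hIF' (hmeas a) hprod_meas
        _ = (∫ ω, f a ω ∂μ) * ∏ i ∈ s, ∫ ω, f i ω ∂μ := by rw [ih.2]

end IndepProd

section Cnt

variable {p n : ℕ}

/-- number of `j ∈ J` with occurrence `(τ j, g j)` equal to the entry `e`. -/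
def cnt {J : Finset (Fin n)} (τ : { x // x ∈ J } ↪ Fin p) (g : { x // x ∈ J } → Fin n)
    (e : Fin p × Fin n) : ℕ :=
  (Finset.univ.filter fun j => ((τ j : Fin p), g j) = e).card

lemma cnt_le_one {J : Finset (Fin n)} (τ : { x // x ∈ J } ↪ Fin p)
    (g : { x // x ∈ J } → Fin n) (e : Fin p × Fin n) : cnt τ g e ≤ 1 := by
  refine Finset.card_le_one.mpr fun a ha b hb => τ.injective ?_
  have ha' := congrArg Prod.fst (Finset.mem_filter.mp ha).2
  have hb' := congrArg Prod.fst (Finset.mem_filter.mp hb).2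
  exact ha'.trans hb'.symm

lemma cnt_exists_iff {J : Finset (Fin n)} (τ : { x // x ∈ J } ↪ Fin p)
    (g : { x // x ∈ J } → Fin n) (e : Fin p × Fin n) :
    0 < cnt τ g e ↔ ∃ j, τ j = e.1 ∧ g j = e.2 := by
  rw [cnt, Finset.card_pos, Finset.filter_nonempty_iff]
  simp [Prod.ext_iff]

lemma cnt_eq_one_of {J : Finset (Fin n)} (τ : { x // x ∈ J } ↪ Fin p)
    (g : { x // x ∈ J } → Fin n) (e : Fin p × Fin n)
    (h : ∃ j, τ j = e.1 ∧ g j = e.2) : cnt τ g e = 1 :=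
  le_antisymm (cnt_le_one τ g e) ((cnt_exists_iff τ g e).mpr h)

lemma cnt_eq_zero_of {J : Finset (Fin n)} (τ : { x // x ∈ J } ↪ Fin p)
    (g : { x // x ∈ J } → Fin n) (e : Fin p × Fin n)
    (h : ¬ ∃ j, τ j = e.1 ∧ g j = e.2) : cnt τ g e = 0 := by
  by_contra h'
  exact h ((cnt_exists_iff τ g e).mp (Nat.pos_of_ne_zero h'))

lemma exists_of_cnt_ne_zero {J : Finset (Fin n)} {τ : { x // x ∈ J } ↪ Fin p}
    {g : { x // x ∈ J } → Fin n} {e : Fin p × Fin n} (h : cnt τ g e ≠ 0) :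
    ∃ j, τ j = e.1 ∧ g j = e.2 :=
  (cnt_exists_iff τ g e).mp (Nat.pos_of_ne_zero h)

/-- The combinatorial core: if `l` is a cycle of `σ₁` such that neither `l` nor `l⁻¹` is
a cycle of `σ₂`, then for any injections `τ₁ τ₂` some matrix entry occurs exactly once. -/
lemma exists_entry_count_one {J₁ J₂ : Finset (Fin n)} (σ₁ σ₂ : Equiv.Perm (Fin n))
    (hσ₁ : ∀ j ∉ J₁, σ₁ j = j)
    (l : Equiv.Perm (Fin n)) (hl : l ∈ σ₁.cycleFactorsFinset)
    (hl₂ : l ∉ σ₂.cycleFactorsFinset) (hl₂' : l⁻¹ ∉ σ₂.cycleFactorsFinset)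
    (τ₁ : { x // x ∈ J₁ } ↪ Fin p) (τ₂ : { x // x ∈ J₂ } ↪ Fin p) :
    ∃ e : Fin p × Fin n,
      cnt τ₁ (fun j => (j : Fin n)) e + cnt τ₁ (fun j => σ₁ j) e +
        cnt τ₂ (fun j => (j : Fin n)) e + cnt τ₂ (fun j => σ₂ j) e = 1 := by
  by_contra hcon
  push_neg at hcon
  obtain ⟨hcyc, hagree⟩ := Equiv.Perm.mem_cycleFactorsFinset_iff.mp hl
  have hsub : ∀ {j : Fin n}, j ∈ l.support → j ∈ J₁ := by
    intro j hj
    by_contra hnot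
    have h1 : σ₁ j = j := hσ₁ _ hnot
    have h2 : l j = σ₁ j := hagree _ hj
    exact Equiv.Perm.mem_support.mp hj (h2.trans h1)
  -- key step: matching forced by the contradiction hypothesis
  have key : ∀ j (hj : j ∈ l.support), ∃ m : { x // x ∈ J₂ },
      τ₂ m = τ₁ ⟨j, hsub hj⟩ ∧
        (((m : Fin n) = j ∧ σ₂ j = l j) ∨ ((m : Fin n) = l j ∧ σ₂ (l j) = j)) := by
    intro j hj
    have hne : l j ≠ j := Equiv.Perm.mem_support.mp hj
    have hσ₁j : σ₁ j = l j := (hagree j hj).symm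
    set jhat : { x // x ∈ J₁ } := ⟨j, hsub hj⟩ with hjhat
    -- entry (τ₁ jhat, l j)
    have h1 : cnt τ₁ (fun j => (j : Fin n)) (τ₁ jhat, l j) = 0 := by
      refine cnt_eq_zero_of _ _ _ ?_
      rintro ⟨j', hj1, hj2⟩
      have : j' = jhat := τ₁.injective hj1
      subst this
      exact hne (hj2.symm)
    have h2 : cnt τ₁ (fun j => σ₁ j) (τ₁ jhat, l j) = 1 :=
      cnt_eq_one_of _ _ _ ⟨jhat, rfl, hσ₁j⟩
    have hA := hcon (τ₁ jhat, l j)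
    rw [h1, h2] at hA
    have hex1 : ∃ m : { x // x ∈ J₂ }, τ₂ m = τ₁ jhat ∧
        ((m : Fin n) = l j ∨ σ₂ m = l j) := by
      have : cnt τ₂ (fun j => (j : Fin n)) (τ₁ jhat, l j) ≠ 0 ∨
          cnt τ₂ (fun j => σ₂ j) (τ₁ jhat, l j) ≠ 0 := by omega
      rcases this with h | h
      · obtain ⟨m, hm1, hm2⟩ := exists_of_cnt_ne_zero h
        exact ⟨m, hm1, Or.inl hm2⟩
      · obtain ⟨m, hm1, hm2⟩ := exists_of_cnt_ne_zero h
        exact ⟨m, hm1, Or.inr hm2⟩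
    -- entry (τ₁ jhat, j)
    have h3 : cnt τ₁ (fun j => (j : Fin n)) (τ₁ jhat, j) = 1 :=
      cnt_eq_one_of _ _ _ ⟨jhat, rfl, rfl⟩
    have h4 : cnt τ₁ (fun j => σ₁ j) (τ₁ jhat, j) = 0 := by
      refine cnt_eq_zero_of _ _ _ ?_
      rintro ⟨j', hj1, hj2⟩
      have : j' = jhat := τ₁.injective hj1
      subst this
      exact hne (hσ₁j ▸ hj2)
    have hB := hcon (τ₁ jhat, j)
    rw [h3, h4] at hB
    have hex2 : ∃ m : { x // x ∈ J₂ }, τ₂ m = τ₁ jhat ∧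
        ((m : Fin n) = j ∨ σ₂ m = j) := by
      have : cnt τ₂ (fun j => (j : Fin n)) (τ₁ jhat, j) ≠ 0 ∨
          cnt τ₂ (fun j => σ₂ j) (τ₁ jhat, j) ≠ 0 := by omega
      rcases this with h | h
      · obtain ⟨m, hm1, hm2⟩ := exists_of_cnt_ne_zero h
        exact ⟨m, hm1, Or.inl hm2⟩
      · obtain ⟨m, hm1, hm2⟩ := exists_of_cnt_ne_zero h
        exact ⟨m, hm1, Or.inr hm2⟩
    obtain ⟨m, hm1, hm2⟩ := hex1
    obtain ⟨m', hm1', hm2'⟩ := hex2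
    have hmm : m' = m := τ₂.injective (hm1'.trans hm1.symm)
    subst hmm
    refine ⟨m', hm1, ?_⟩
    rcases hm2 with h5 | h5 <;> rcases hm2' with h6 | h6
    · exact absurd (h5.symm.trans h6) hne
    · exact Or.inr ⟨h5, by rw [← h5]; exact h6⟩
    · exact Or.inl ⟨h6, by rw [h6] at h5; exact h5⟩
    · exact absurd (h5.symm.trans h6) hne
  -- the two possible local configurations
  set P : Fin n → Prop := fun j => ∃ (hj : j ∈ l.support) (m : { x // x ∈ J₂ }),
    τ₂ m = τ₁ ⟨j, hsub hj⟩ ∧ (m : Fin n) = j ∧ σ₂ j = l j with hP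
  set Q : Fin n → Prop := fun j => ∃ (hj : j ∈ l.support) (m : { x // x ∈ J₂ }),
    τ₂ m = τ₁ ⟨j, hsub hj⟩ ∧ (m : Fin n) = l j ∧ σ₂ (l j) = j with hQ
  have key' : ∀ j, j ∈ l.support → P j ∨ Q j := by
    intro j hj
    obtain ⟨m, hm1, hm2⟩ := key j hj
    rcases hm2 with ⟨h5, h6⟩ | ⟨h5, h6⟩
    · exact Or.inl ⟨hj, m, hm1, h5, h6⟩
    · exact Or.inr ⟨hj, m, hm1, h5, h6⟩
  have coe_ne : ∀ {j j' : Fin n} (hj : j ∈ l.support) (hj' : j' ∈ l.support)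
      {m m' : { x // x ∈ J₂ }}, τ₂ m = τ₁ ⟨j, hsub hj⟩ → τ₂ m' = τ₁ ⟨j', hsub hj'⟩ →
      m = m' → j = j' := by
    intro j j' hj hj' m m' h1 h2 h3
    subst h3
    have := τ₁.injective (h1.symm.trans h2)
    exact congrArg Subtype.val this
  have stepP : ∀ j, P j → P (l j) := by
    intro j hPj
    obtain ⟨hj, m, hm1, hm2, hm3⟩ := hPj
    have hlj : l j ∈ l.support := Equiv.Perm.apply_mem_support.mpr hj
    rcases key' (l j) hlj with h | h
    · exact h
    · exfalso
      obtain ⟨hj', m', hm1', hm2', hm3'⟩ := h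
      -- σ₂ j = l j and σ₂ (l (l j)) = l j give j = l (l j)
      have hjj : j = l (l j) := σ₂.injective (hm3.trans hm3'.symm)
      have hmm : m = m' := Subtype.ext (by rw [hm2, hm2', ← hjj])
      have : j = l j := coe_ne hj hj' hm1 hm1' hmm
      exact Equiv.Perm.mem_support.mp hj this.symm
  have stepQ : ∀ j, Q j → Q (l j) := by
    intro j hQj
    obtain ⟨hj, m, hm1, hm2, hm3⟩ := hQj
    have hlj : l j ∈ l.support := Equiv.Perm.apply_mem_support.mpr hj
    rcases key' (l j) hlj with h | h
    · exfalso
      obtain ⟨hj', m', hm1', hm2', hm3'⟩ := h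
      have hmm : m = m' := Subtype.ext (by rw [hm2, hm2'])
      have : j = l j := coe_ne hj hj' hm1 hm1' hmm
      exact Equiv.Perm.mem_support.mp hj this.symm
    · exact h
  have iterP : ∀ (k : ℕ) (j : Fin n), P j → P ((l ^ k) j) := by
    intro k
    induction k with
    | zero => intro j h; simpa using h
    | succ k ih =>
      intro j h
      have : (l ^ (k + 1)) j = l ((l ^ k) j) := by
        rw [pow_succ', Equiv.Perm.mul_apply]
      rw [this]
      exact stepP _ (ih j h)
  have iterQ : ∀ (k : ℕ) (j : Fin n), Q j → Q ((l ^ k) j) := by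
    intro k
    induction k with
    | zero => intro j h; simpa using h
    | succ k ih =>
      intro j h
      have : (l ^ (k + 1)) j = l ((l ^ k) j) := by
        rw [pow_succ', Equiv.Perm.mul_apply]
      rw [this]
      exact stepQ _ (ih j h)
  obtain ⟨x, hx, -⟩ := id hcyc
  have hxs : x ∈ l.support := Equiv.Perm.mem_support.mpr hx
  have cover : ∀ j ∈ l.support, ∃ k : ℕ, (l ^ k) x = j := by
    intro j hj
    exact hcyc.exists_pow_eq hx (Equiv.Perm.mem_support.mp hj)
  rcases key' x hxs with h | h
  · refine hl₂ (Equiv.Perm.mem_cycleFactorsFinset_iff.mpr ⟨hcyc, ?_⟩)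
    intro a ha
    obtain ⟨k, hk⟩ := cover a ha
    have : P a := hk ▸ iterP k x h
    obtain ⟨_, _, _, _, h'⟩ := this
    exact h'.symm
  · refine hl₂' (Equiv.Perm.mem_cycleFactorsFinset_iff.mpr ⟨hcyc.inv, ?_⟩)
    intro a ha
    rw [Equiv.Perm.support_inv] at ha
    have hja : l⁻¹ a ∈ l.support := by
      rw [← Equiv.Perm.apply_mem_support (f := l), Equiv.Perm.coe_inv, Equiv.apply_symm_apply]
      exact ha
    obtain ⟨k, hk⟩ := cover _ hja
    have : Q (l⁻¹ a) := hk ▸ iterQ k x h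
    obtain ⟨_, _, _, _, h'⟩ := this
    rw [Equiv.Perm.coe_inv, Equiv.apply_symm_apply] at h'
    exact h'.symm

end Cnt

section Main

variable {p n : ℕ} {Ω : Type} [MeasureSpace Ω] [IsProbabilityMeasure (volume : Measure Ω)]

/-- the grouped factor attached to the entry `e`. -/
def Yfun (M : Ω → Matrix (Fin p) (Fin n) ℂ) (A B : Fin p × Fin n → ℕ)
    (e : Fin p × Fin n) (ω : Ω) : ℂ :=
  M ω e.1 e.2 ^ A e * (starRingEnd ℂ) (M ω e.1 e.2) ^ B e

lemma Yfun_measurable (M : Ω → Matrix (Fin p) (Fin n) ℂ)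
    (hmeas : ∀ i j, Measurable fun ω => M ω i j) (A B : Fin p × Fin n → ℕ)
    (e : Fin p × Fin n) : Measurable (Yfun M A B e) :=
  (((hmeas e.1 e.2).pow_const _).mul
    (((RCLike.continuous_conj.measurable).comp (hmeas e.1 e.2)).pow_const _))

lemma Yfun_indep (M : Ω → Matrix (Fin p) (Fin n) ℂ)
    (hindep : iIndepFun
      (fun (ij : Fin p × Fin n) ω => M ω ij.1 ij.2) (volume : Measure Ω))
    (A B : Fin p × Fin n → ℕ) :
    iIndepFun (fun e => Yfun M A B e)
      (volume : Measure Ω) := by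
  have hgm : ∀ e : Fin p × Fin n,
      Measurable fun z : ℂ => z ^ A e * (starRingEnd ℂ) z ^ B e := fun e =>
    (measurable_id.pow_const _).mul ((RCLike.continuous_conj.measurable.comp measurable_id).pow_const _)
  exact hindep.comp (fun e => fun z : ℂ => z ^ A e * (starRingEnd ℂ) z ^ B e) hgm

lemma Yfun_integrable (M : Ω → Matrix (Fin p) (Fin n) ℂ)
    (hmeas : ∀ i j, Measurable fun ω => M ω i j)
    (hmom4 : ∀ i j, MemLp (fun ω => M ω i j) 4 (volume : Measure Ω))
    (A B : Fin p × Fin n → ℕ) (e : Fin p × Fin n) (hle : A e + B e ≤ 4) :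
    Integrable (Yfun M A B e) (volume : Measure Ω) := by
  have h4int : Integrable (fun ω => ‖M ω e.1 e.2‖ ^ (4 : ℕ)) (volume : Measure Ω) := by
    have h := (hmom4 e.1 e.2).integrable_norm_rpow (by norm_num) (by norm_num)
    have h2 : (fun ω => ‖M ω e.1 e.2‖ ^ (4 : ℕ))
        = fun ω => ‖M ω e.1 e.2‖ ^ ((4 : ℝ≥0∞)).toReal := by
      funext ω
      rw [show ((4 : ℝ≥0∞)).toReal = ((4 : ℕ) : ℝ) by norm_num, Real.rpow_natCast]
    rw [h2]
    exact h
  refine ((integrable_const (1 : ℝ)).add h4int).mono'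
    (Yfun_measurable M hmeas A B e).aestronglyMeasurable (ae_of_all _ fun ω => ?_)
  show ‖Yfun M A B e ω‖ ≤ (1 : ℝ) + ‖M ω e.1 e.2‖ ^ (4 : ℕ)
  have hnorm : ‖Yfun M A B e ω‖ = ‖M ω e.1 e.2‖ ^ (A e + B e) := by
    rw [Yfun, norm_mul, norm_pow, norm_pow, RCLike.norm_conj, ← pow_add]
  rw [hnorm]
  have h2 : (0 : ℝ) ≤ ‖M ω e.1 e.2‖ ^ (4 : ℕ) := pow_nonneg (norm_nonneg _) _
  rcases le_total ‖M ω e.1 e.2‖ 1 with h | h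
  · have h1 : ‖M ω e.1 e.2‖ ^ (A e + B e) ≤ 1 := pow_le_one₀ (norm_nonneg _) h
    linarith
  · have h1 : ‖M ω e.1 e.2‖ ^ (A e + B e) ≤ ‖M ω e.1 e.2‖ ^ (4 : ℕ) :=
      pow_le_pow_right₀ h hle
    linarith

lemma Yfun_integral_zero (M : Ω → Matrix (Fin p) (Fin n) ℂ)
    (hmean : ∀ i j, (∫ ω, M ω i j) = 0) (A B : Fin p × Fin n → ℕ)
    (e : Fin p × Fin n) (h1 : A e + B e = 1) :
    (∫ ω, Yfun M A B e ω) = 0 := by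
  rcases Nat.eq_zero_or_pos (A e) with hA | hA
  · have hB : B e = 1 := by omega
    have : (fun ω => Yfun M A B e ω)
        = fun ω => (starRingEnd ℂ) (M ω e.1 e.2) := by
      funext ω; rw [Yfun, hA, hB, pow_zero, pow_one, one_mul]
    rw [this, integral_conj, hmean e.1 e.2, map_zero]
  · have hA' : A e = 1 := by omega
    have hB : B e = 0 := by omega
    have : (fun ω => Yfun M A B e ω) = fun ω => M ω e.1 e.2 := by
      funext ω; rw [Yfun, hA', hB, pow_zero, pow_one, mul_one]
    rw [this]
    exact hmean e.1 e.2

lemma term_integral (M : Ω → Matrix (Fin p) (Fin n) ℂ)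
    (hmeas : ∀ i j, Measurable fun ω => M ω i j)
    (hindep : iIndepFun
      (fun (ij : Fin p × Fin n) ω => M ω ij.1 ij.2) (volume : Measure Ω))
    (hmean : ∀ i j, (∫ ω, M ω i j) = 0)
    (hmom4 : ∀ i j, MemLp (fun ω => M ω i j) 4 (volume : Measure Ω))
    {J₁ J₂ : Finset (Fin n)} (σ₁ σ₂ : Equiv.Perm (Fin n))
    (τ₁ : { x // x ∈ J₁ } ↪ Fin p) (τ₂ : { x // x ∈ J₂ } ↪ Fin p) :
    Integrable (fun ω =>
      (∏ j : { x // x ∈ J₁ }, (starRingEnd ℂ) (M ω (τ₁ j) j) * M ω (τ₁ j) (σ₁ j)) *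
        (starRingEnd ℂ) (∏ j : { x // x ∈ J₂ },
          (starRingEnd ℂ) (M ω (τ₂ j) j) * M ω (τ₂ j) (σ₂ j))) (volume : Measure Ω) ∧
      ((∃ e : Fin p × Fin n,
          cnt τ₁ (fun j => (j : Fin n)) e + cnt τ₁ (fun j => σ₁ j) e +
            cnt τ₂ (fun j => (j : Fin n)) e + cnt τ₂ (fun j => σ₂ j) e = 1) →
        (∫ ω, (∏ j : { x // x ∈ J₁ },
            (starRingEnd ℂ) (M ω (τ₁ j) j) * M ω (τ₁ j) (σ₁ j)) *
          (starRingEnd ℂ) (∏ j : { x // x ∈ J₂ },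
            (starRingEnd ℂ) (M ω (τ₂ j) j) * M ω (τ₂ j) (σ₂ j))) = 0) := by
  classical
  set A : Fin p × Fin n → ℕ :=
    fun e => cnt τ₁ (fun j => σ₁ j) e + cnt τ₂ (fun j => (j : Fin n)) e with hA
  set B : Fin p × Fin n → ℕ :=
    fun e => cnt τ₁ (fun j => (j : Fin n)) e + cnt τ₂ (fun j => σ₂ j) e with hB
  have hprod : (fun ω =>
      (∏ j : { x // x ∈ J₁ }, (starRingEnd ℂ) (M ω (τ₁ j) j) * M ω (τ₁ j) (σ₁ j)) *
        (starRingEnd ℂ) (∏ j : { x // x ∈ J₂ },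
          (starRingEnd ℂ) (M ω (τ₂ j) j) * M ω (τ₂ j) (σ₂ j)))
      = fun ω => ∏ e : Fin p × Fin n, Yfun M A B e ω := by
    funext ω
    have h1 : (∏ j : { x // x ∈ J₁ }, (starRingEnd ℂ) (M ω (τ₁ j) j))
        = ∏ e : Fin p × Fin n, ((starRingEnd ℂ) (M ω e.1 e.2)) ^
            cnt τ₁ (fun j => (j : Fin n)) e :=
      prod_comp_univ Finset.univ (fun j : { x // x ∈ J₁ } => ((τ₁ j : Fin p), (j : Fin n)))
        (fun e => (starRingEnd ℂ) (M ω e.1 e.2))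
    have h2 : (∏ j : { x // x ∈ J₁ }, M ω (τ₁ j) (σ₁ j))
        = ∏ e : Fin p × Fin n, (M ω e.1 e.2) ^ cnt τ₁ (fun j => σ₁ j) e :=
      prod_comp_univ Finset.univ (fun j : { x // x ∈ J₁ } => ((τ₁ j : Fin p), σ₁ (j : Fin n)))
        (fun e => M ω e.1 e.2)
    have h3 : (∏ j : { x // x ∈ J₂ }, M ω (τ₂ j) j)
        = ∏ e : Fin p × Fin n, (M ω e.1 e.2) ^ cnt τ₂ (fun j => (j : Fin n)) e :=
      prod_comp_univ Finset.univ (fun j : { x // x ∈ J₂ } => ((τ₂ j : Fin p), (j : Fin n)))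
        (fun e => M ω e.1 e.2)
    have h4 : (∏ j : { x // x ∈ J₂ }, (starRingEnd ℂ) (M ω (τ₂ j) (σ₂ j)))
        = ∏ e : Fin p × Fin n, ((starRingEnd ℂ) (M ω e.1 e.2)) ^
            cnt τ₂ (fun j => σ₂ j) e :=
      prod_comp_univ Finset.univ (fun j : { x // x ∈ J₂ } => ((τ₂ j : Fin p), σ₂ (j : Fin n)))
        (fun e => (starRingEnd ℂ) (M ω e.1 e.2))
    rw [map_prod]
    simp only [_root_.map_mul, starRingEnd_self_apply]
    rw [Finset.prod_mul_distrib, Finset.prod_mul_distrib, h1, h2, h3, h4,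
      ← Finset.prod_mul_distrib, ← Finset.prod_mul_distrib, ← Finset.prod_mul_distrib]
    refine Finset.prod_congr rfl fun e _ => ?_
    simp only [Yfun, hA, hB]
    rw [pow_add, pow_add]
    ring
  have hABle : ∀ e, A e + B e ≤ 4 := by
    intro e
    have c1 := cnt_le_one τ₁ (fun j => (j : Fin n)) e
    have c2 := cnt_le_one τ₁ (fun j => σ₁ j) e
    have c3 := cnt_le_one τ₂ (fun j => (j : Fin n)) e
    have c4 := cnt_le_one τ₂ (fun j => σ₂ j) e
    simp only [hA, hB]
    omega
  obtain ⟨hint, hval⟩ := iIndep_integral_prod (fun e => Yfun M A B e)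
    (Yfun_indep M hindep A B) (Yfun_measurable M hmeas A B)
    (fun e => Yfun_integrable M hmeas hmom4 A B e (hABle e)) Finset.univ
  constructor
  · rw [hprod]; exact hint
  · rintro ⟨e₀, he₀⟩
    calc (∫ ω, (∏ j : { x // x ∈ J₁ },
            (starRingEnd ℂ) (M ω (τ₁ j) j) * M ω (τ₁ j) (σ₁ j)) *
          (starRingEnd ℂ) (∏ j : { x // x ∈ J₂ },
            (starRingEnd ℂ) (M ω (τ₂ j) j) * M ω (τ₂ j) (σ₂ j)))
        = ∫ ω, ∏ e : Fin p × Fin n, Yfun M A B e ω := by rw [hprod]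
      _ = ∏ e : Fin p × Fin n, ∫ ω, Yfun M A B e ω := hval
      _ = 0 := Finset.prod_eq_zero (Finset.mem_univ e₀)
          (Yfun_integral_zero M hmean A B e₀ (by simp only [hA, hB]; omega))

end Main

/-- Let `1 ≤ p ≤ n` and let `M` be a random complex `p×n` matrix with independent
entries of mean `0`, `E(|t_{ij}|²) = 1` and finite fourth moments.  Let
`J₁, J₂ ⊆ {1,…,n}` have cardinality at most `p` and let `σ₁, σ₂` be permutations of
`J₁, J₂` respectively (encoded as permutations of `{1,…,n}` fixing the complements).
If `σ₁` contains a cycle `l` of length at least `2` such that neither `l` nor `l⁻¹`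
is a cycle of `σ₂`, then `E(ξ*_{σ₁} conj(ξ*_{σ₂})) = 0`. -/
theorem expectation_xiStar_mul_conj_eq_zero (p n : ℕ) (hp : 1 ≤ p) (hpn : p ≤ n)
    (Ω : Type) (_ : MeasureSpace Ω) (_ : IsProbabilityMeasure (volume : Measure Ω))
    (M : Ω → Matrix (Fin p) (Fin n) ℂ)
    (hmeas : ∀ i j, Measurable fun ω => M ω i j)
    (hindep : iIndepFun
      (fun (ij : Fin p × Fin n) ω => M ω ij.1 ij.2) (volume : Measure Ω))
    (hmean : ∀ i j, (∫ ω, M ω i j) = 0)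
    (hvar : ∀ i j, (∫ ω, (‖M ω i j‖ : ℝ) ^ 2) = 1)
    (hmom4 : ∀ i j, MemLp (fun ω => M ω i j) 4 (volume : Measure Ω))
    (J₁ J₂ : Finset (Fin n)) (hJ₁ : J₁.card ≤ p) (hJ₂ : J₂.card ≤ p)
    (σ₁ σ₂ : Equiv.Perm (Fin n))
    (hσ₁ : ∀ j ∉ J₁, σ₁ j = j) (hσ₂ : ∀ j ∉ J₂, σ₂ j = j)
    (l : Equiv.Perm (Fin n)) (hl : l ∈ σ₁.cycleFactorsFinset)
    (hlen : 2 ≤ l.support.card)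
    (hl₂ : l ∉ σ₂.cycleFactorsFinset) (hl₂' : l⁻¹ ∉ σ₂.cycleFactorsFinset) :
    (∫ ω, xiStar (M ω) J₁ σ₁ * (starRingEnd ℂ) (xiStar (M ω) J₂ σ₂)) = 0 := by
  classical
  have hexp : ∀ ω, xiStar (M ω) J₁ σ₁ * (starRingEnd ℂ) (xiStar (M ω) J₂ σ₂)
      = ∑ τ₁ : { x // x ∈ J₁ } ↪ Fin p, ∑ τ₂ : { x // x ∈ J₂ } ↪ Fin p,
          (∏ j : { x // x ∈ J₁ }, (starRingEnd ℂ) (M ω (τ₁ j) j) * M ω (τ₁ j) (σ₁ j)) *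
            (starRingEnd ℂ) (∏ j : { x // x ∈ J₂ },
              (starRingEnd ℂ) (M ω (τ₂ j) j) * M ω (τ₂ j) (σ₂ j)) := by
    intro ω
    rw [xiStar, xiStar, map_sum, Finset.sum_mul_sum]
  simp only [hexp]
  rw [integral_finset_sum _ (fun τ₁ _ => integrable_finset_sum _ (fun τ₂ _ =>
    (term_integral M hmeas hindep hmean hmom4 σ₁ σ₂ τ₁ τ₂).1))]
  refine Finset.sum_eq_zero fun τ₁ _ => ?_
  rw [integral_finset_sum _ (fun τ₂ _ =>
    (term_integral M hmeas hindep hmean hmom4 σ₁ σ₂ τ₁ τ₂).1)]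
  refine Finset.sum_eq_zero fun τ₂ _ => ?_
  exact (term_integral M hmeas hindep hmean hmom4 σ₁ σ₂ τ₁ τ₂).2
    (exists_entry_count_one σ₁ σ₂ hσ₁ l hl hl₂ hl₂' τ₁ τ₂)
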